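/- Let m ≥ 2 and let A be an abelian group (written additively). For ε ∈ {+1,-1} let E_ε ⊆ {+1,-1}^{2m} be the set of sign vectors with product of coordinates equal to ε. Suppose p_1, ..., p_{2m} ∈ A. Then the map sending a pair (a, b) ∈ E_+ × E_+ with a ≠ b to the pair (a', b') ∈ E_- × E_- obtained by flipping the signs of both a and b in the first coordinate where they differ is a bijection from {(a,b) ∈ E_+² : a ≠ b} onto {(a',b') ∈ E_-² : a' ≠ b'}, and it satisfies Σ_i (a_i + b_i)·p_i = Σ_i (a'_i + b'_i)·p_i. -/

import Mathlib

open Finset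

/-- Flip the signs of both components of a pair of vectors at the first coordinate where
they differ (and do nothing if they are equal). -/
def flipPair {n : ℕ} (x : (Fin n → ℤ) × (Fin n → ℤ)) :
    (Fin n → ℤ) × (Fin n → ℤ) :=
  if h : x.1 = x.2 then x
  else
    let i := (Finset.univ.filter fun i => x.1 i ≠ x.2 i).min' (by
      obtain ⟨i, hi⟩ := Function.ne_iff.mp h
      exact ⟨i, by simpa using hi⟩)
    (Function.update x.1 i (-(x.1 i)), Function.update x.2 i (-(x.2 i)))

/-- The sign vectors of length `n` with product of coordinates `ε`. -/
def signVec (n : ℕ) (ε : ℤ) : Set (Fin n → ℤ) :=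
  {a | (∀ i, a i = 1 ∨ a i = -1) ∧ ∏ i, a i = ε}

lemma diffSet_nonempty {n : ℕ} {x : (Fin n → ℤ) × (Fin n → ℤ)} (h : x.1 ≠ x.2) :
    (Finset.univ.filter fun i => x.1 i ≠ x.2 i).Nonempty := by
  obtain ⟨i, hi⟩ := Function.ne_iff.mp h
  exact ⟨i, by simpa using hi⟩

noncomputable def diffIdx {n : ℕ} (x : (Fin n → ℤ) × (Fin n → ℤ)) (h : x.1 ≠ x.2) : Fin n :=
  (Finset.univ.filter fun i => x.1 i ≠ x.2 i).min' (diffSet_nonempty h)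

lemma flipPair_of_ne {n : ℕ} {x : (Fin n → ℤ) × (Fin n → ℤ)} (h : x.1 ≠ x.2) :
    flipPair x = (Function.update x.1 (diffIdx x h) (-(x.1 (diffIdx x h))),
      Function.update x.2 (diffIdx x h) (-(x.2 (diffIdx x h)))) := by
  simp only [flipPair, dif_neg h, diffIdx]

lemma diffIdx_mem {n : ℕ} (x : (Fin n → ℤ) × (Fin n → ℤ)) (h : x.1 ≠ x.2) :
    x.1 (diffIdx x h) ≠ x.2 (diffIdx x h) := by
  have := Finset.min'_mem _ (diffSet_nonempty h)
  simpa [diffIdx] using this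

lemma update_neg_mem_signVec {n : ℕ} {a : Fin n → ℤ} {ε : ℤ}
    (ha : a ∈ signVec n ε) (i : Fin n) :
    Function.update a i (-(a i)) ∈ signVec n (-ε) := by
  constructor
  · intro j
    rcases eq_or_ne j i with rfl | hj
    · rcases ha.1 j with h1 | h1 <;> simp [h1]
    · simpa [Function.update_of_ne hj] using ha.1 j
  · rw [Finset.prod_update_of_mem (Finset.mem_univ i), neg_mul,
      ← Finset.prod_eq_mul_prod_sdiff_singleton_of_mem (Finset.mem_univ i), ha.2]

lemma flipPair_flipPair {n : ℕ} {x : (Fin n → ℤ) × (Fin n → ℤ)} (h : x.1 ≠ x.2) :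
    flipPair (flipPair x) = x := by
  set i := diffIdx x h with hi
  have hne : x.1 i ≠ x.2 i := diffIdx_mem x h
  rw [flipPair_of_ne h, ← hi]
  have h2 : (Function.update x.1 i (-(x.1 i))) ≠ (Function.update x.2 i (-(x.2 i))) := by
    intro hc
    have := congrFun hc i
    simp at this
    exact hne this
  have hset : (Finset.univ.filter fun j =>
        Function.update x.1 i (-(x.1 i)) j ≠ Function.update x.2 i (-(x.2 i)) j)
      = (Finset.univ.filter fun j => x.1 j ≠ x.2 j) := by
    ext j
    simp only [Finset.mem_filter, Finset.mem_univ, true_and]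
    rcases eq_or_ne j i with rfl | hj
    · simp [hne]
    · simp [Function.update_of_ne hj]
  rw [flipPair_of_ne h2]
  have hidx : diffIdx (Function.update x.1 i (-(x.1 i)), Function.update x.2 i (-(x.2 i))) h2 = i := by
    simp only [diffIdx]
    congr 1
  rw [hidx]
  ext j <;> simp [Function.update_idem]

lemma flipPair_mapsTo {n : ℕ} {ε : ℤ} {x : (Fin n → ℤ) × (Fin n → ℤ)}
    (h1 : x.1 ∈ signVec n ε) (h2 : x.2 ∈ signVec n ε) (h : x.1 ≠ x.2) :
    (flipPair x).1 ∈ signVec n (-ε) ∧ (flipPair x).2 ∈ signVec n (-ε) ∧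
      (flipPair x).1 ≠ (flipPair x).2 := by
  rw [flipPair_of_ne h]
  refine ⟨update_neg_mem_signVec h1 _, update_neg_mem_signVec h2 _, fun hc => ?_⟩
  have := congrFun hc (diffIdx x h)
  simp at this
  exact diffIdx_mem x h this

/-- The map flipping the signs of both vectors at the first coordinate where they differ
is a sum-preserving bijection from off-diagonal pairs of even sign vectors onto
off-diagonal pairs of odd sign vectors. -/
theorem flip_pair_bijOn_and_sum_preserving (m : ℕ) (hm : 2 ≤ m)
    (A : Type*) [AddCommGroup A] (p : Fin (2 * m) → A) :
    Set.BijOn flipPair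
      {x : (Fin (2 * m) → ℤ) × (Fin (2 * m) → ℤ) |
        x.1 ∈ signVec (2 * m) 1 ∧ x.2 ∈ signVec (2 * m) 1 ∧ x.1 ≠ x.2}
      {x : (Fin (2 * m) → ℤ) × (Fin (2 * m) → ℤ) |
        x.1 ∈ signVec (2 * m) (-1) ∧ x.2 ∈ signVec (2 * m) (-1) ∧ x.1 ≠ x.2} ∧
    ∀ x ∈ {x : (Fin (2 * m) → ℤ) × (Fin (2 * m) → ℤ) |
        x.1 ∈ signVec (2 * m) 1 ∧ x.2 ∈ signVec (2 * m) 1 ∧ x.1 ≠ x.2},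
      ∑ i, (x.1 i + x.2 i) • p i
        = ∑ i, ((flipPair x).1 i + (flipPair x).2 i) • p i := by
  constructor
  · have mt1 : Set.MapsTo flipPair
        {x : (Fin (2 * m) → ℤ) × (Fin (2 * m) → ℤ) |
          x.1 ∈ signVec (2 * m) 1 ∧ x.2 ∈ signVec (2 * m) 1 ∧ x.1 ≠ x.2}
        {x : (Fin (2 * m) → ℤ) × (Fin (2 * m) → ℤ) |
          x.1 ∈ signVec (2 * m) (-1) ∧ x.2 ∈ signVec (2 * m) (-1) ∧ x.1 ≠ x.2} := by
      rintro x ⟨h1, h2, h⟩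
      exact flipPair_mapsTo h1 h2 h
    have mt2 : Set.MapsTo flipPair
        {x : (Fin (2 * m) → ℤ) × (Fin (2 * m) → ℤ) |
          x.1 ∈ signVec (2 * m) (-1) ∧ x.2 ∈ signVec (2 * m) (-1) ∧ x.1 ≠ x.2}
        {x : (Fin (2 * m) → ℤ) × (Fin (2 * m) → ℤ) |
          x.1 ∈ signVec (2 * m) 1 ∧ x.2 ∈ signVec (2 * m) 1 ∧ x.1 ≠ x.2} := by
      rintro x ⟨h1, h2, h⟩
      simpa using flipPair_mapsTo h1 h2 h
    exact Set.InvOn.bijOn ⟨fun x hx => flipPair_flipPair hx.2.2,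
      fun x hx => flipPair_flipPair hx.2.2⟩ mt1 mt2
  · rintro x ⟨h1, h2, h⟩
    refine Finset.sum_congr rfl fun j _ => ?_
    rw [flipPair_of_ne h]
    set i := diffIdx x h with hi
    rcases eq_or_ne j i with rfl | hj
    · have hne : x.1 i ≠ x.2 i := diffIdx_mem x h
      have hab : x.1 i + x.2 i = 0 := by
        rcases h1.1 i with ha | ha <;> rcases h2.1 i with hb | hb <;>
          simp [ha, hb] at hne ⊢
      simp [hab]
      have : -x.1 i + -x.2 i = 0 := by linarith
      simp [this]
    · simp [Function.update_of_ne hj]
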